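/- The 6-tuples (λ, g, ν, Δ, d, a) ∈ ℤ⁶ such that (λ, g, Δ, d, a) ∈ Γ₁₇₄, ν ≥ 0, the Le Barz bound holds, d₃ = 0, d₂ = 0, and d₁ − 1 ≥ 0, are exactly the two tuples (12, 10, 0, 3, 3, 1) and (12, 10, 1, 2, 4, 1). -/
import Mathlib


/-- The admissibility predicate from Lemma 2.2 of the paper. -/
def Admissible (l g D d a : ℤ) : Prop :=
  3 ≤ l ∧ l ≤ 27 ∧ 0 ≤ g ∧
  2 * g ≤ ((l - 2) / 3) * (2 * l - 8 - 3 * ((l - 2) / 3 - 1)) ∧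
  1 ≤ d ∧ d ≤ 5 ∧ 1 ≤ D ∧ 0 ≤ a ∧
  (d = 5 ↔ D = 1) ∧ (d = 4 ↔ D = 2) ∧
  (D = 1 → a = 0) ∧ (D = 2 → a = 1) ∧ (3 ≤ D → 1 ≤ a) ∧
  0 ≤ 2 * l - g + 1 ∧
  0 ≤ -21 * l + 6 * g - D * d + 237 ∧
  0 ≤ l ^ 2 + 9 * l - 18 * g + 18 ∧
  0 ≤ 49 * l ^ 2 - 28 * l * g + 4 * g ^ 2 + (D * d - 1106) * l + 316 * g - 27 * (D * d) + 6241 ∧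
  0 ≤ 7 * D * l - 2 * D * g + D ^ 2 * d ^ 2 - 79 * D ∧
  0 ≤ l ^ 2 + 7 * l - 10 * g - 2 * (D * d) + 12 * a - 12 * (if d = 1 then (1 : ℤ) else 0) - 92 ∧
  0 ≤ -10 * l + 8 * g + 2 * (D * d) - 12 * a + 12 * (if d = 1 then (1 : ℤ) else 0) + 94 ∧
  0 ≤ -290 * l + 140 * g - 13 * (D * d) + D + 2290 ∧
  0 ≤ -147 * l + 74 * g + 12 * (D * d) - D - 84 * a + 108 * (if d = 1 then (1 : ℤ) else 0) + 1183

/-- `CIFactor D s a` : there exist integers `e₁, …, e_a`, all `≥ 2`, with product `D` and sum `s`. -/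
def CIFactor (D s a : ℤ) : Prop :=
  ∃ e : List ℤ, (e.length : ℤ) = a ∧ (∀ x ∈ e, 2 ≤ x) ∧ e.prod = D ∧ e.sum = s


lemma two_mul_length_le_sum : ∀ e : List ℤ, (∀ x ∈ e, 2 ≤ x) → 2 * (e.length : ℤ) ≤ e.sum := by
  intro e
  induction e with
  | nil => simp
  | cons x t ih =>
    intro h
    have hx := h x (by simp)
    have ht := ih (fun y hy => h y (by simp [hy]))
    simp only [List.length_cons, List.sum_cons]
    push_cast
    omega

lemma cif_cases {D d a : ℤ} (hd2 : 2 ≤ d) (hd5 : d ≤ 5)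
    (h : CIFactor D (a + 5 - d) a) :
    (d = 5 ∧ D = 1 ∧ a = 0) ∨ (d = 4 ∧ D = 2 ∧ a = 1) ∨ (d = 3 ∧ D = 3 ∧ a = 1) ∨
    (d = 3 ∧ D = 4 ∧ a = 2) ∨ (d = 2 ∧ D = 4 ∧ a = 1) ∨ (d = 2 ∧ D = 6 ∧ a = 2) ∨
    (d = 2 ∧ D = 8 ∧ a = 3) := by
  obtain ⟨e, hlen, hge, hprod, hsum⟩ := h
  have hle := two_mul_length_le_sum e hge
  have hlen3 : e.length ≤ 3 := by omega
  match e, hlen3 with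
  | [], _ =>
    simp at hlen hprod hsum; omega
  | [x], _ =>
    have hx := hge x (by simp)
    simp at hlen hprod hsum; omega
  | [x, y], _ =>
    have hx := hge x (by simp)
    have hy := hge y (by simp)
    simp at hlen hprod hsum
    have hc : (x = 2 ∧ y = 2) ∨ (x = 2 ∧ y = 3) ∨ (x = 3 ∧ y = 2) := by omega
    rcases hc with ⟨rfl, rfl⟩ | ⟨rfl, rfl⟩ | ⟨rfl, rfl⟩ <;> norm_num at hprod <;> omega
  | [x, y, z], _ =>
    have hx := hge x (by simp)
    have hy := hge y (by simp)
    have hz := hge z (by simp)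
    simp at hlen hprod hsum
    have hc : x = 2 ∧ y = 2 ∧ z = 2 := by omega
    obtain ⟨rfl, rfl, rfl⟩ := hc
    norm_num at hprod; omega

/-- The set Γ₁₇₄ from the proof of Theorem 2.3 of the paper. -/
def Gamma174 (l g D d a : ℤ) : Prop :=
  Admissible l g D d a ∧ d ≠ 1 ∧ CIFactor D (a + 5 - d) a

/-- `K_B · H_B²` for the base locus, from Lemma 2.1. -/
def KH2 (l g : ℤ) : ℤ := -2 * l + 2 * g - 2

/-- `K_B² · H_B` for the base locus, from Lemma 2.1. -/
def K2H (l g D d a : ℤ) : ℤ := -39 * l + 14 * g + D * d - 12 * a + 331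

/-- `K_B³` for the base locus, from Lemma 2.1. -/
def K3 (l g D d a : ℤ) : ℤ := l ^ 2 - 77 * l + 14 * g - 3 * (D * d) - D - 12 * a + 688

/-- The Le Barz quadrisecant bound on the number ν of exceptional divisors. -/
def LeBarz (l g ν D d a : ℤ) : Prop :=
  8 * ν ≤ l ^ 4 - 4 * l ^ 2 * (D * d) + 4 * D ^ 2 * d ^ 2 + 6 * l ^ 3 - 24 * l ^ 2 * g
    + 4 * l * (D * d) + 40 * g * (D * d) + 24 * l ^ 2 * a - 48 * (D * d) * a
    - 433 * l ^ 2 + 160 * l * g + 104 * g ^ 2 + 100 * (D * d) - 56 * l * a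
    - 240 * g * a + 144 * a ^ 2 + 5650 * l - 784 * g - 168 * a - 23752

/-- In the proof of Theorem 2.3, the del Pezzo fibration case: `d₃ = d₂ = 0` and `d₁ ≥ 1`
select exactly `(12, 10, 0, 3, 3, 1)` and `(12, 10, 1, 2, 4, 1)`. -/
theorem delPezzo_fibration_solutions (l g ν D d a : ℤ) :
    (Gamma174 l g D d a ∧ 0 ≤ ν ∧ LeBarz l g ν D d a ∧
      K3 l g D d a + 3 * K2H l g D d a + 3 * KH2 l g + l - ν = 0 ∧
      K2H l g D d a + 2 * KH2 l g + l + ν = 0 ∧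
      0 ≤ KH2 l g + l - ν - 1)
    ↔ ((l, g, ν, D, d, a) = (12, 10, 0, 3, 3, 1) ∨
        (l, g, ν, D, d, a) = (12, 10, 1, 2, 4, 1)) := by
  constructor
  · rintro ⟨⟨hadm, hdne, hcif⟩, hν, hLB, h3, h2, h1⟩
    obtain ⟨hl3, hl27, hg0, hgq, hd1, hd5, hD1, ha0, _, _, _, _, _, hc1, _⟩ := hadm
    simp only [KH2, K2H, K3] at h1 h2 h3
    clear hLB
    have hd2 : 2 ≤ d := by omega
    simp only [Prod.mk.injEq]
    rcases cif_cases hd2 hd5 hcif with ⟨rfl, rfl, rfl⟩ | ⟨rfl, rfl, rfl⟩ | ⟨rfl, rfl, rfl⟩ |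
        ⟨rfl, rfl, rfl⟩ | ⟨rfl, rfl, rfl⟩ | ⟨rfl, rfl, rfl⟩ | ⟨rfl, rfl, rfl⟩ <;>
      interval_cases l <;> omega
  · rintro (h | h) <;> simp only [Prod.mk.injEq] at h <;>
      obtain ⟨rfl, rfl, rfl, rfl, rfl, rfl⟩ := h
    · exact ⟨⟨by simp only [Admissible]; norm_num, by decide, [3], by decide, by norm_num,
        by decide, by decide⟩, by decide, by simp only [LeBarz]; norm_num, by decide, by decide,
        by decide⟩
    · exact ⟨⟨by simp only [Admissible]; norm_num, by decide, [2], by decide, by norm_num,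
        by decide, by decide⟩, by decide, by simp only [LeBarz]; norm_num, by decide, by decide,
        by decide⟩
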